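/- Let G be a finite group of order 48 whose Sylow 3-subgroup is normal. Then either G is isomorphic to the direct product P × Q of a Sylow 2-subgroup P and the Sylow 3-subgroup Q of G, or there exists a surjective group homomorphism from G onto the symmetric group S₃. -/

import Mathlib

/-- `Equiv.permCongr` as a `MulEquiv`. -/
def permCongrMulEquivAux {α β : Type*} (e : α ≃ β) : Equiv.Perm α ≃* Equiv.Perm β :=
  { Equiv.permCongr e with
    map_mul' := fun p q => by
      ext x
      simp [Equiv.permCongr_apply] }

/-- A group of order 48 with a normal Sylow 3-subgroup is either a direct product of a
Sylow 2-subgroup and the Sylow 3-subgroup, or surjects onto `S₃`. -/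
theorem order48_normal_sylow3_dichotomy (G : Type) [Group G] (hG : Nat.card G = 48)
    (Q : Sylow 3 G) (hQ : (Q : Subgroup G).Normal) :
    (∃ P : Sylow 2 G, Nonempty (G ≃* (↥(P : Subgroup G) × ↥(Q : Subgroup G)))) ∨
    (∃ f : G →* Equiv.Perm (Fin 3), Function.Surjective f) := by
  have hfin : Finite G := Nat.finite_of_card_ne_zero (by rw [hG]; norm_num)
  have hp2 : Fact (Nat.Prime 2) := ⟨Nat.prime_two⟩
  have hp3 : Fact (Nat.Prime 3) := ⟨Nat.prime_three⟩
  obtain ⟨P⟩ : Nonempty (Sylow 2 G) := inferInstance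
  have hf2 : (48 : ℕ).factorization 2 = 4 := by
    rw [show (48:ℕ) = 2^4*3 by norm_num, Nat.factorization_mul (by norm_num) (by norm_num),
      Nat.Prime.factorization_pow (by norm_num)]
    simp [Nat.Prime.factorization, Nat.prime_three]
  have hf3 : (48 : ℕ).factorization 3 = 1 := by
    rw [show (48:ℕ) = 2^4*3 by norm_num, Nat.factorization_mul (by norm_num) (by norm_num),
      Nat.Prime.factorization_pow (by norm_num)]
    simp [Nat.Prime.factorization, Nat.prime_three]
  have hcardP : Nat.card (P : Subgroup G) = 16 := by
    rw [P.card_eq_multiplicity, hG, hf2]; norm_num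
  have hcardQ : Nat.card (Q : Subgroup G) = 3 := by
    rw [Q.card_eq_multiplicity, hG, hf3]; norm_num
  by_cases hPn : (P : Subgroup G).Normal
  · -- direct product case
    left
    refine ⟨P, ?_⟩
    have hdisj : Disjoint (P : Subgroup G) (Q : Subgroup G) := by
      rw [disjoint_iff]
      exact Subgroup.inf_eq_bot_of_coprime (by rw [hcardP, hcardQ]; norm_num)
    have comm : ∀ (p : ↥(P : Subgroup G)) (q : ↥(Q : Subgroup G)),
        Commute ((P : Subgroup G).subtype p) ((Q : Subgroup G).subtype q) := fun p q =>
      Subgroup.commute_of_normal_of_disjoint _ _ hPn hQ hdisj p q p.2 q.2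
    let f : (↥(P : Subgroup G) × ↥(Q : Subgroup G)) →* G :=
      MonoidHom.noncommCoprod (P : Subgroup G).subtype (Q : Subgroup G).subtype comm
    have hinj : Function.Injective f := by
      rw [injective_iff_map_eq_one]
      rintro ⟨p, q⟩ h
      have h1 : (p : G) * (q : G) = 1 := h
      have hp : (p : G) ∈ (P : Subgroup G) ⊓ (Q : Subgroup G) :=
        ⟨p.2, by rw [eq_inv_of_mul_eq_one_left h1]; exact (Q : Subgroup G).inv_mem q.2⟩
      rw [hdisj.eq_bot] at hp
      have hp1 : (p : G) = 1 := hp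
      have hq1 : (q : G) = 1 := by
        have h2 := h1; rw [hp1, one_mul] at h2; exact h2
      refine Prod.ext ?_ ?_ <;> ext <;> assumption
    have hbij : Function.Bijective f := by
      rw [Nat.bijective_iff_injective_and_card]
      exact ⟨hinj, by rw [Nat.card_prod, hcardP, hcardQ, hG]⟩
    exact ⟨(MulEquiv.ofBijective f hbij).symm⟩
  · -- surjection onto S₃ via action on cosets of P
    right
    have hindex : (P : Subgroup G).index = 3 := by
      have h := (P : Subgroup G).index_mul_card
      rw [hcardP, hG] at h; omega
    have hq3 : Nat.card (G ⧸ (P : Subgroup G)) = 3 := by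
      rw [← Subgroup.index_eq_card, hindex]
    have : Fintype (G ⧸ (P : Subgroup G)) := Fintype.ofFinite _
    have e : (G ⧸ (P : Subgroup G)) ≃ Fin 3 :=
      Fintype.equivFinOfCardEq (by rw [← Nat.card_eq_fintype_card, hq3])
    let π : G →* Equiv.Perm (G ⧸ (P : Subgroup G)) := MulAction.toPermHom G _
    let f : G →* Equiv.Perm (Fin 3) := (permCongrMulEquivAux e).toMonoidHom.comp π
    have hkerf : f.ker ≤ (P : Subgroup G) := by
      intro g hg
      have hg' : f g = 1 := hg
      have hπ : π g = 1 := (permCongrMulEquivAux e).injective (by rw [map_one]; exact hg')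
      have hact : g • ((1 : G) : G ⧸ (P : Subgroup G)) = ((1 : G) : G ⧸ (P : Subgroup G)) := by
        have h2 := congrFun (congrArg (fun (p : Equiv.Perm (G ⧸ (P : Subgroup G))) => ⇑p) hπ)
          ((1 : G) : G ⧸ (P : Subgroup G))
        simpa [π] using h2
      have hmk : ((g : G) : G ⧸ (P : Subgroup G)) = ((1 : G) : G ⧸ (P : Subgroup G)) := by
        simpa using hact
      have := QuotientGroup.eq.mp hmk
      simpa using this
    -- an element of order 3
    have hnt : Nontrivial ↥(Q : Subgroup G) := by
      rw [← Finite.one_lt_card_iff_nontrivial, hcardQ]; norm_num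
    obtain ⟨q, hq1⟩ := exists_ne (1 : ↥(Q : Subgroup G))
    have horder : orderOf (q : G) = 3 := by
      have hdvd : orderOf q ∣ 3 := by have := orderOf_dvd_natCard q; rwa [hcardQ] at this
      rcases (Nat.prime_three).eq_one_or_self_of_dvd _ hdvd with h | h
      · exact absurd (orderOf_eq_one_iff.mp h) hq1
      · rw [Subgroup.orderOf_coe]; exact h
    have hfq : f (q : G) ≠ 1 := by
      intro h
      have hmem : (q : G) ∈ (P : Subgroup G) := hkerf h
      have hd : orderOf (q : G) ∣ 16 := by
        have := Subgroup.orderOf_dvd_natCard (P : Subgroup G) hmem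
        rwa [hcardP] at this
      rw [horder] at hd; norm_num at hd
    have hofq : orderOf (f (q : G)) = 3 := by
      have hdvd : orderOf (f (q : G)) ∣ 3 := by
        have := orderOf_map_dvd f (q : G); rwa [horder] at this
      rcases (Nat.prime_three).eq_one_or_self_of_dvd _ hdvd with h | h
      · exact absurd (orderOf_eq_one_iff.mp h) hfq
      · exact h
    have hcard6 : Nat.card (Equiv.Perm (Fin 3)) = 6 := by
      rw [Nat.card_eq_fintype_card, Fintype.card_perm]; norm_num [Nat.factorial]
    have hdvd3 : 3 ∣ Nat.card f.range := by
      have h1 : orderOf (⟨f (q : G), ⟨(q : G), rfl⟩⟩ : f.range) = 3 := by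
        rw [← Subgroup.orderOf_coe]; exact hofq
      have h2 := orderOf_dvd_natCard (⟨f (q : G), ⟨(q : G), rfl⟩⟩ : f.range)
      rwa [h1] at h2
    have hdvd6 : Nat.card f.range ∣ 6 := by
      have := Subgroup.card_subgroup_dvd_card f.range
      rwa [hcard6] at this
    have hr36 : Nat.card f.range = 3 ∨ Nat.card f.range = 6 := by
      have hpos : 0 < Nat.card f.range := Nat.card_pos
      have hle : Nat.card f.range ≤ 6 := Nat.le_of_dvd (by norm_num) hdvd6
      interval_cases h : Nat.card f.range <;> omega
    rcases hr36 with h3 | h6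
    · exfalso
      have hi : f.ker.index = 3 := by
        rw [Subgroup.index_eq_card,
          Nat.card_congr (QuotientGroup.quotientKerEquivRange f).toEquiv, h3]
      have hm := f.ker.index_mul_card
      rw [hi, hG] at hm
      have hkercard : Nat.card f.ker = 16 := by omega
      have hkerP : f.ker = (P : Subgroup G) :=
        Subgroup.eq_of_le_of_card_ge hkerf (by rw [hkercard, hcardP])
      exact hPn (hkerP ▸ f.normal_ker)
    · refine ⟨f, ?_⟩
      rw [← MonoidHom.range_eq_top]
      exact Subgroup.eq_top_of_card_eq _ (by rw [h6, hcard6])
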